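/- Let G = (V, E) be a directed graph with V = {v₁,…,v_p}. Let G' be the directed graph on the node set V^s ∪ V ∪ V^t, where V^s = {v₁^s,…,v_p^s} and V^t = {v₁^t,…,v_p^t} are disjoint copies of V, whose edges are v_i^s → v_i and v_i → v_i^t for every i, together with v_i → v_j for every edge v_i → v_j ∈ E. Then for all i ≠ j, the latent projection of G' over L := V contains the directed edge v_i^s → v_j^t if and only if the transitive closure of G contains the edge v_i → v_j, i.e., there is a directed path from v_i to v_j in G. -/

import Mathlib

/-- The latent projection (over the latent set `L`) of a directed graph with edge relation
`R` contains the directed edge `a → b` (for observed `a, b ∉ L`) exactly when there is a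
directed path from `a` to `b` all of whose non-endpoint nodes lie in `L`. -/
def ProjDirEdge {α : Type} (R : α → α → Prop) (L : Set α) (a b : α) : Prop :=
  a ∉ L ∧ b ∉ L ∧ ∃ l : List α, (∀ v ∈ l, v ∈ L) ∧
    List.Chain R a (l ++ [b]) ∧ (a :: (l ++ [b])).Nodup

/-- The directed graph `G'` on `V^s ⊕ V ⊕ V^t` (where `V = Fin p` and `V^s`, `V^t` are
disjoint copies of `V`) with edges `vᵢˢ → vᵢ` and `vᵢ → vᵢᵗ` for every `i`, together with
`vᵢ → vⱼ` for every edge `vᵢ → vⱼ` of `G`. -/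
def tcGraph {p : ℕ} (E : Fin p → Fin p → Prop) :
    (Fin p ⊕ Fin p ⊕ Fin p) → (Fin p ⊕ Fin p ⊕ Fin p) → Prop
  | Sum.inl i, Sum.inr (Sum.inl j) => i = j
  | Sum.inr (Sum.inl i), Sum.inr (Sum.inr j) => i = j
  | Sum.inr (Sum.inl i), Sum.inr (Sum.inl j) => E i j
  | _, _ => False

/-- The middle copy of `V`, taken as the latent nodes. -/
def tcLatent (p : ℕ) : Set (Fin p ⊕ Fin p ⊕ Fin p) :=
  {v | ∃ k : Fin p, v = Sum.inr (Sum.inl k)}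

/-- From a transitive-closure step we can extract a duplicate-free chain. -/
theorem exists_simple_chain {α : Type} {E : α → α → Prop} {j : α} :
    ∀ {i : α}, Relation.TransGen E i j →
      i = j ∨ ∃ m : List α, List.Chain E i (m ++ [j]) ∧ (i :: (m ++ [j])).Nodup := by
  intro i h
  induction h using Relation.TransGen.head_induction_on with
  | single h =>
    rename_i a
    by_cases haj : a = j
    · exact Or.inl haj
    · exact Or.inr ⟨[], List.chain_cons.mpr ⟨h, List.Chain.nil⟩, by simp [haj]⟩
  | head hik htk IH =>
    rename_i a k
    by_cases haj : a = j
    · exact Or.inl haj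
    right
    rcases IH with hkj | ⟨m, hc, hn⟩
    · subst hkj
      exact ⟨[], List.chain_cons.mpr ⟨hik, List.Chain.nil⟩, by simp [haj]⟩
    by_cases hi : a ∈ k :: m
    · obtain ⟨m₁, m₂, hm⟩ := List.append_of_mem hi
      have heq : k :: (m ++ [j]) = m₁ ++ (a :: (m₂ ++ [j])) := by
        rw [show k :: (m ++ [j]) = (k :: m) ++ [j] by simp, hm]
        simp
      have hc' : List.Chain' E (k :: (m ++ [j])) := hc
      rw [heq] at hc' hn
      refine ⟨m₂, (List.isChain_split.mp hc').2,
        hn.sublist (List.sublist_append_right m₁ _)⟩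
    · refine ⟨k :: m, List.chain_cons.mpr ⟨hik, hc⟩, ?_⟩
      refine List.nodup_cons.mpr ⟨?_, hn⟩
      have : a ∉ (k :: m) ++ [j] := by
        simp only [List.mem_append, List.mem_singleton]
        rintro (h' | h')
        · exact hi h'
        · exact haj h'
      simpa using this

theorem chain_to_rtg {p : ℕ} {E : Fin p → Fin p → Prop} {j : Fin p} :
    ∀ (l : List (Fin p ⊕ Fin p ⊕ Fin p)) (k : Fin p),
      (∀ v ∈ l, v ∈ tcLatent p) →
      List.Chain (tcGraph E) (Sum.inr (Sum.inl k)) (l ++ [Sum.inr (Sum.inr j)]) →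
      Relation.ReflTransGen E k j := by
  intro l
  induction l with
  | nil =>
    intro k _ hc
    have h : k = j := (List.chain_cons.mp hc).1
    exact h ▸ Relation.ReflTransGen.refl
  | cons v l ih =>
    intro k hl hc
    obtain ⟨k', hk'⟩ := hl v (List.mem_cons_self)
    subst hk'
    have h := List.chain_cons.mp hc
    have hE : E k k' := h.1
    exact Relation.ReflTransGen.head hE
      (ih k' (fun w hw => hl w (List.mem_cons_of_mem _ hw)) h.2)

/-- For all `i ≠ j`, the latent projection of `G'` over `L := V` contains
the directed edge `vᵢˢ → vⱼᵗ` if and only if the transitive closure of `G` contains the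
edge `vᵢ → vⱼ`, i.e., there is a directed path from `vᵢ` to `vⱼ` in `G`. -/
theorem latent_projection_edge_iff_transitive_closure {p : ℕ} (E : Fin p → Fin p → Prop) :
    ∀ i j : Fin p, i ≠ j →
      (ProjDirEdge (tcGraph E) (tcLatent p) (Sum.inl i) (Sum.inr (Sum.inr j)) ↔
        Relation.TransGen E i j) := by
  intro i j hij
  constructor
  · rintro ⟨-, -, l, hl, hc, -⟩
    cases l with
    | nil => exact absurd (List.chain_cons.mp hc).1 (by simp [tcGraph])
    | cons v l =>
      obtain ⟨k, hk⟩ := hl v (List.mem_cons_self)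
      subst hk
      have h := List.chain_cons.mp hc
      have hik : i = k := h.1
      subst hik
      have hr := chain_to_rtg l i (fun w hw => hl w (List.mem_cons_of_mem _ hw)) h.2
      rcases Relation.reflTransGen_iff_eq_or_transGen.mp hr with h' | h'
      · exact absurd h'.symm hij
      · exact h'
  · intro h
    rcases exists_simple_chain h with h' | ⟨m, hc, hn⟩
    · exact absurd h' hij
    set g : Fin p → (Fin p ⊕ Fin p ⊕ Fin p) := fun k => Sum.inr (Sum.inl k) with hg
    refine ⟨by simp [tcLatent], by simp [tcLatent], List.map g (i :: (m ++ [j])), ?_, ?_, ?_⟩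
    · intro v hv
      simp only [List.mem_map] at hv
      obtain ⟨k, _, hk⟩ := hv
      exact ⟨k, hk.symm⟩
    · simp only [List.map_cons, List.cons_append]
      refine List.chain_cons.mpr ⟨rfl, ?_⟩
      have hmap : List.Chain (tcGraph E) (g i) (List.map g (m ++ [j])) := by
        show List.IsChain _ (g i :: List.map g (m ++ [j]))
        rw [← List.map_cons, List.isChain_map]
        exact List.IsChain.imp (fun a b hab => hab) (show List.IsChain E (i :: (m ++ [j])) from hc)
      have he : List.map g (m ++ [j]) ++ [Sum.inr (Sum.inr j)]
          = List.map g m ++ (g j :: [Sum.inr (Sum.inr j)]) := by simp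
      rw [he]
      show List.IsChain _ (g i :: (List.map g m ++ g j :: _))
      rw [List.isChain_cons_split]
      constructor
      · have he2 : List.map g m ++ [g j] = List.map g (m ++ [j]) := by simp
        rw [he2]; exact hmap
      · exact List.chain_cons.mpr ⟨rfl, List.Chain.nil⟩
    · have hginj : Function.Injective g := by
        intro a b hab; simpa [hg] using hab
      have hmn : (List.map g (i :: (m ++ [j]))).Nodup := hn.map hginj
      rw [List.nodup_cons]
      refine ⟨by simp [hg], ?_⟩
      rw [List.nodup_append]
      refine ⟨hmn, List.nodup_singleton _, ?_⟩
      intro a ha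
      simp only [List.mem_map] at ha
      obtain ⟨k, _, hk⟩ := ha
      simp [← hk, hg]
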